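/- Let (W_n) be a normalized recursive polynomial sequence of order two. The set of indices n such that W_n(c) = 0, for a common zero c, forms an arithmetic progression (specifically, either all n ≥ 2 when B(c) = 0, or {n : n ≡ r (mod p)} for some integers 2 ≤ p and 1 ≤ r ≤ p−1 when B(c) ≠ 0). -/

import Mathlib

private def seqx (a b : ℂ) : ℕ → ℂ
  | 0 => 0
  | 1 => 1
  | (n+2) => a * seqx a b (n+1) + b * seqx a b n

private lemma seqx_rec (a b : ℂ) : ∀ n, seqx a b (n+2) = a * seqx a b (n+1) + b * seqx a b n :=
  fun _ => rfl

private lemma two_step_eq (a b : ℂ) (u v : ℕ → ℂ)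
    (hu : ∀ n, u (n+2) = a * u (n+1) + b * u n)
    (hv : ∀ n, v (n+2) = a * v (n+1) + b * v n)
    (h0 : u 0 = v 0) (h1 : u 1 = v 1) : ∀ n, u n = v n := by
  have key : ∀ n, u n = v n ∧ u (n+1) = v (n+1) := by
    intro n
    induction n with
    | zero => exact ⟨h0, h1⟩
    | succ k ih => exact ⟨ih.2, by rw [hu, hv, ih.1, ih.2]⟩
  exact fun n => (key n).1

private lemma full_agree (a b : ℂ) (hb : b ≠ 0) (u v : ℕ → ℂ)
    (hu : ∀ n, u (n+2) = a * u (n+1) + b * u n)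
    (hv : ∀ n, v (n+2) = a * v (n+1) + b * v n) :
    ∀ m, u m = v m → u (m+1) = v (m+1) → ∀ k, u k = v k := by
  intro m
  induction m with
  | zero => exact fun h0 h1 => two_step_eq a b u v hu hv h0 h1
  | succ j ih =>
    intro h0 h1
    have hj : u j = v j := by
      have h2 : b * u j = b * v j := by
        linear_combination (hv j) - (hu j) + h1 - a * h0
      exact mul_left_cancel₀ hb h2
    exact ih hj h0

private lemma shift_lemma (a b : ℂ) (u : ℕ → ℂ)
    (hu : ∀ n, u (n+2) = a * u (n+1) + b * u n)
    (s : ℕ) (hs : u s = 0) :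
    ∀ k, u (s + k) = u (s+1) * seqx a b k := by
  apply two_step_eq a b (fun k => u (s+k)) (fun k => u (s+1) * seqx a b k)
  · intro n; exact hu (s+n)
  · intro n; rw [seqx_rec]; ring
  · simpa [seqx] using hs
  · simp [seqx]

theorem stmt_9 (A B : Polynomial ℂ) (W : ℕ → Polynomial ℂ) (hW0 : W 0 = 1)
    (hrec : ∀ n, 2 ≤ n → W n = A * W (n - 1) + B * W (n - 2))
    (c : ℂ)
    (hcommon : ∃ i j : ℕ, i ≠ j ∧ (W i).eval c = 0 ∧ (W j).eval c = 0) :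
    (B.eval c = 0 ∧ ∀ n, 2 ≤ n → (W n).eval c = 0) ∨
    (B.eval c ≠ 0 ∧ ∃ p r : ℕ, 2 ≤ p ∧ 1 ≤ r ∧ r ≤ p - 1 ∧
      ∀ n, 1 ≤ n → ((W n).eval c = 0 ↔ n % p = r)) := by
  classical
  set a := A.eval c with ha
  set b := B.eval c with hbdef
  set w : ℕ → ℂ := fun n => (W n).eval c with hwdef
  have hw0 : w 0 = 1 := by simp [hwdef, hW0]
  have hw : ∀ n, w (n+2) = a * w (n+1) + b * w n := by
    intro n
    have h := hrec (n+2) (by omega)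
    rw [show n+2-1 = n+1 from rfl, show n+2-2 = n from rfl] at h
    show (W (n+2)).eval c = a * (W (n+1)).eval c + b * (W n).eval c
    rw [h]; simp [Polynomial.eval_add, Polynomial.eval_mul]; rfl
  obtain ⟨i, j, hij, hi, hj⟩ := hcommon
  have hi' : w i = 0 := hi
  have hj' : w j = 0 := hj
  by_cases hb : b = 0
  · left
    refine ⟨hb, ?_⟩
    have hw' : ∀ n, w (n+2) = a * w (n+1) := by intro n; rw [hw]; simp [hb]
    by_cases hw1 : w 1 = 0
    · have hz : ∀ n, w (n+1) = 0 := by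
        intro n; induction n with
        | zero => exact hw1
        | succ k ih => rw [hw' k, ih, mul_zero]
      intro n hn
      obtain ⟨m, rfl⟩ : ∃ m, n = m + 1 := ⟨n-1, by omega⟩
      exact hz m
    · have hpow : ∀ n, w (n+1) = a^n * w 1 := by
        intro n; induction n with
        | zero => simp
        | succ k ih => rw [hw' k, ih]; ring
      have ha0 : a = 0 := by
        have hi2 : 2 ≤ i := by
          rcases i with _ | _ | i
          · rw [hw0] at hi'; exact absurd hi' one_ne_zero
          · exact absurd hi' hw1
          · omega
        obtain ⟨m, rfl⟩ : ∃ m, i = m + 1 := ⟨i-1, by omega⟩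
        have h := hpow m
        rw [hi'] at h
        have hm : a ^ m = 0 := by
          rcases mul_eq_zero.mp h.symm with h' | h'
          · exact h'
          · exact absurd h' hw1
        exact pow_eq_zero_iff (n := m) (by omega) |>.mp hm
      intro n hn
      obtain ⟨m, rfl⟩ : ∃ m, n = m + 1 := ⟨n-1, by omega⟩
      show w (m+1) = 0
      rw [hpow m, ha0, zero_pow (by omega : m ≠ 0), zero_mul]
  · right
    set x := seqx a b with hx
    have hxrec : ∀ n, x (n+2) = a * x (n+1) + b * x n := seqx_rec a b
    -- no two consecutive zeros in w
    have hnz : ∀ m, w m = 0 → w (m+1) = 0 → False := by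
      intro m h1 h2
      have hall := full_agree a b hb w (fun _ => 0) hw (by intro n; simp) m
        (by simpa using h1) (by simpa using h2) 0
      rw [hw0] at hall; simpa using hall
    have hex : ∃ n, w n = 0 := ⟨i, hi'⟩
    set s := Nat.find hex with hsdef
    have hs : w s = 0 := Nat.find_spec hex
    have hmin : ∀ m, m < s → w m ≠ 0 := fun m hm => Nat.find_min hex hm
    have hs1 : 1 ≤ s := by
      rcases Nat.eq_zero_or_pos s with h | h
      · rw [h, hw0] at hs; exact absurd hs one_ne_zero
      · exact h
    have hws1 : w (s+1) ≠ 0 := fun h => hnz s hs h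
    have hshift : ∀ k, w (s + k) = w (s+1) * x k := shift_lemma a b w hw s hs
    -- a positive zero of x exists
    have hex2 : ∃ k, 0 < k ∧ x k = 0 := by
      obtain ⟨j0, hj0ne, hj0⟩ : ∃ j0, j0 ≠ s ∧ w j0 = 0 := by
        rcases eq_or_ne i s with rfl | h
        · exact ⟨j, fun h' => hij h'.symm, hj'⟩
        · exact ⟨i, h, hi'⟩
      have hj0s : s ≤ j0 := Nat.find_min' hex hj0
      have hlt : s < j0 := lt_of_le_of_ne hj0s (fun h => hj0ne h.symm)
      refine ⟨j0 - s, by omega, ?_⟩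
      have h := hshift (j0 - s)
      rw [show s + (j0 - s) = j0 from by omega, hj0] at h
      exact (mul_eq_zero.mp h.symm).resolve_left hws1
    set p := Nat.find hex2 with hpdef
    have hp := Nat.find_spec hex2
    have hpmin : ∀ m, m < p → ¬(0 < m ∧ x m = 0) := fun m hm => Nat.find_min hex2 hm
    have hxp1 : x (p+1) ≠ 0 := by
      intro h
      have hall := full_agree a b hb x (fun _ => 0) hxrec (by intro n; simp) p
        (by simpa using hp.2) (by simpa using h) 1
      simp [hx, seqx] at hall
    have hxshift : ∀ k, x (p + k) = x (p+1) * x k := shift_lemma a b x hxrec p hp.2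
    have hxmul : ∀ q, x (p * q) = 0 := by
      intro q
      induction q with
      | zero => simp [hx, seqx]
      | succ k ih =>
        rw [show p * (k+1) = p + p * k from by ring, hxshift, ih, mul_zero]
    have hxdvd : ∀ k, x k = 0 → p ∣ k := by
      intro k
      induction k using Nat.strong_induction_on with
      | _ k ih =>
        intro hk
        rcases Nat.lt_or_ge k p with h | h
        · rcases Nat.eq_zero_or_pos k with rfl | hk0
          · exact dvd_zero p
          · exact absurd ⟨hk0, hk⟩ (hpmin k h)
        · have hxk : x (k - p) = 0 := by
            have h2 := hxshift (k - p)
            rw [show p + (k - p) = k from by omega, hk] at h2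
            exact (mul_eq_zero.mp h2.symm).resolve_left hxp1
          obtain ⟨q, hq⟩ := ih (k - p) (by omega) hxk
          exact ⟨q + 1, by rw [Nat.mul_succ]; omega⟩
    have hsp : s < p := by
      by_contra h
      push_neg at h
      set μ := w (s+1) / x (p+1) with hμ
      have hall := full_agree a b hb (fun k => w (s - p + k)) (fun k => μ * x k)
        (fun n => hw (s - p + n))
        (fun n => by show μ * x (n+2) = a * (μ * x (n+1)) + b * (μ * x n); rw [hxrec]; ring) p
        (by
          show w (s - p + p) = μ * x p
          rw [show s - p + p = s from by omega, hs, hp.2, mul_zero])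
        (by
          show w (s - p + (p+1)) = μ * x (p+1)
          rw [show s - p + (p+1) = s + 1 from by omega, hμ, div_mul_cancel₀ _ hxp1])
        0
      have : w (s - p) = 0 := by simpa [hx, seqx] using hall
      exact hmin (s - p) (by omega) this
    refine ⟨hb, p, s, by omega, hs1, by omega, ?_⟩
    intro n hn
    constructor
    · intro hzn
      have hzn' : w n = 0 := hzn
      have hsn : s ≤ n := Nat.find_min' hex hzn'
      have hxk : x (n - s) = 0 := by
        have h := hshift (n - s)
        rw [show s + (n - s) = n from by omega, hzn'] at h
        exact (mul_eq_zero.mp h.symm).resolve_left hws1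
      obtain ⟨q, hq⟩ := hxdvd (n - s) hxk
      have hnq : n = s + p * q := by omega
      rw [hnq, Nat.add_mul_mod_self_left]
      exact Nat.mod_eq_of_lt hsp
    · intro hmod
      have hq : n = s + p * (n / p) := by
        have := Nat.div_add_mod n p
        omega
      have h := hshift (p * (n / p))
      rw [hxmul (n / p), mul_zero] at h
      show w n = 0
      rw [hq]; exact h
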